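/- For every integer n ≥ 3 and every λ ∈ [0, 1/n], q_{n+1}(n,λ) − p_{n−1}(n,λ) ≥ [(n+1)(n−2)/(4n(n−1))]·(1 − 1/n)^n. -/

import Mathlib

/-- The output distribution p(n,λ) of the general attenuator with Fock environment |n⟩,
for ℓ = 0, …, n+1 (the case ℓ = n+1 is the continuous extension of the formula
… · λ^(n-ℓ) · …, which involves λ⁻¹, valid for all λ ∈ (0,1)). -/
noncomputable def pdist (n ℓ : ℕ) (t : ℝ) : ℝ :=
  if ℓ ≤ n then
    1 / (2 * ((n : ℝ) + 1) * (1 - t)) * ((n + 1).choose ℓ : ℝ) * (1 - t) ^ ℓ * t ^ (n - ℓ) *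
      ((1 - t) * ((n : ℝ) - (ℓ : ℝ) + 1) + (((n : ℝ) + 1) * (1 - t) - (ℓ : ℝ)) ^ 2)
  else ((n : ℝ) + 1) * t * (1 - t) ^ n / 2

/-- The output distribution q(n,λ) (spectrum of the joint output state). -/
noncomputable def qdist (n ℓ : ℕ) (t : ℝ) : ℝ :=
  if ℓ ≤ n then
    1 / (2 * ((n : ℝ) + 1) * (1 - t)) * ((n + 1).choose ℓ : ℝ) * (1 - t) ^ ℓ * t ^ (n - ℓ) *
      (t * (ℓ : ℝ) + (((n : ℝ) + 1) * (1 - t) - (ℓ : ℝ)) ^ 2)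
  else (1 - t) ^ n * (1 + ((n : ℝ) + 1) * t) / 2

/- ### Auxiliary material -/

lemma E_nonpos (N u : ℝ) (hN : 3 ≤ N) (hu0 : 0 ≤ u) (hu1 : u ≤ 1) :
    N^4*((u-1)*(u^2-6*u+6)) + N^3*(2+2*u-8*u^2+3*u^3)
      + N^2*(u*(-6+5*u+u^2)) + N*(u^2*(6-3*u)) - 2*u^3 ≤ 0 := by
  have hN0 : (0:ℝ) < N := by linarith
  have h1u : 0 ≤ 1 - u := by linarith
  have hneg : (u-1)*(u^2-6*u+6) ≤ 0 := by nlinarith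
  have h34 : 3*N^3 ≤ N^4 := by nlinarith [pow_pos hN0 3]
  have h1 : N^4*((u-1)*(u^2-6*u+6)) ≤ 3*N^3*((u-1)*(u^2-6*u+6)) :=
    mul_le_mul_of_nonpos_right h34 hneg
  have h2 : N^2*(u*(-6+5*u+u^2)) ≤ 0 := by
    apply mul_nonpos_of_nonneg_of_nonpos (sq_nonneg N)
    nlinarith
  have h3 : N*(u^2*(6-3*u)) ≤ (2/3)*N^3*u^2 := by
    nlinarith [mul_nonneg (mul_nonneg hu0 hu0) hu0, sq_nonneg u,
      mul_nonneg (mul_nonneg hu0 hu0) hN0.le, sq_nonneg (u*(N-3)), sq_nonneg (u*N)]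
  have hcub : 18*u^3-85*u^2+114*u-48 ≤ 0 := by
    nlinarith [mul_nonneg (mul_nonneg h1u h1u) h1u, mul_nonneg (mul_nonneg hu0 h1u) h1u,
      mul_nonneg (mul_nonneg hu0 hu0) h1u, mul_nonneg (mul_nonneg hu0 hu0) hu0]
  have hq : 3*N^3*((u-1)*(u^2-6*u+6)) + N^3*(2+2*u-8*u^2+3*u^3) + (2/3)*N^3*u^2 ≤ 0 := by
    have hid : 3*N^3*((u-1)*(u^2-6*u+6)) + N^3*(2+2*u-8*u^2+3*u^3) + (2/3)*N^3*u^2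
        = N^3 * ((18*u^3-85*u^2+114*u-48)/3) := by ring
    rw [hid]
    apply mul_nonpos_of_nonneg_of_nonpos (by positivity)
    linarith
  have hu3 : 0 ≤ u^3 := by positivity
  linarith

/-- The cubic polynomial f(x) (output gap divided by (1-x)^(n-2)). -/
noncomputable def fAux (N : ℝ) (x : ℝ) : ℝ :=
  1/2 - (N + 1/2)*x + (N^2 + N/2 - 1/2)*x^2 + (-(N^3)/4 - N^2/2 + N/4 + 1/2)*x^3

/-- Derivative of fAux. -/
noncomputable def fdAux (N : ℝ) (x : ℝ) : ℝ :=
  -(N + 1/2) + (2*N^2 + N - 1)*x + (-(3*N^3)/4 - 3*N^2/2 + 3*N/4 + 3/2)*x^2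

lemma phi_nonpos (N x : ℝ) (hN : 3 ≤ N) (hx : 0 ≤ x) (hx1 : N * x ≤ 1) :
    (1-x) * fdAux N x - (N-2) * fAux N x ≤ 0 := by
  unfold fAux fdAux
  have hN0 : (0:ℝ) < N := by linarith
  have hu0 : 0 ≤ N * x := mul_nonneg hN0.le hx
  have hE : 4*N^3*((1-x) * (-(N + 1/2) + (2*N^2 + N - 1)*x + (-(3*N^3)/4 - 3*N^2/2 + 3*N/4 + 3/2)*x^2)
      - (N-2) * (1/2 - (N + 1/2)*x + (N^2 + N/2 - 1/2)*x^2 + (-(N^3)/4 - N^2/2 + N/4 + 1/2)*x^3))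
      = N^4*((N*x-1)*((N*x)^2-6*(N*x)+6)) + N^3*(2+2*(N*x)-8*(N*x)^2+3*(N*x)^3)
      + N^2*((N*x)*(-6+5*(N*x)+(N*x)^2)) + N*((N*x)^2*(6-3*(N*x))) - 2*(N*x)^3 := by
    ring
  have hE2 := E_nonpos N (N*x) hN hu0 hx1
  have h4 : (0:ℝ) < 4*N^3 := by positivity
  nlinarith [hE, hE2, h4]

lemma fAux_hasDeriv (N x : ℝ) : HasDerivAt (fAux N) (fdAux N x) x := by
  have h0 := (((hasDerivAt_id x).const_mul (-(N + 1/2))).const_add (1/2)).add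
      (((hasDerivAt_pow 2 x).const_mul (N^2 + N/2 - 1/2)).add
        ((hasDerivAt_pow 3 x).const_mul (-(N^3)/4 - N^2/2 + N/4 + 1/2)))
  have heq : fAux N = fun y : ℝ => 1/2 + (-(N + 1/2)) * (id y : ℝ) + ((N^2 + N/2 - 1/2)*y^2
      + (-(N^3)/4 - N^2/2 + N/4 + 1/2)*y^3) := by
    funext y; unfold fAux; simp only [id]; ring
  rw [heq]
  convert h0 using 1
  · exact rfl
  · exact rfl
  · exact rfl
  unfold fdAux
  push_cast
  ring

/-- The gap function G(x) = (1-x)^(m+1) f(x). -/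
noncomputable def GAux (N : ℝ) (m : ℕ) (x : ℝ) : ℝ := (1-x)^(m+1) * fAux N x

lemma GAux_hasDeriv (N : ℝ) (m : ℕ) (x : ℝ) :
    HasDerivAt (GAux N m) ((1-x)^m * ((1-x) * fdAux N x - ((m:ℝ)+1) * fAux N x)) x := by
  have hp : HasDerivAt (fun y : ℝ => (1-y)^(m+1))
      ((((m:ℕ)+1 : ℕ) : ℝ) * (1-x)^(m+1-1) * (-1)) x :=
    ((hasDerivAt_id x).const_sub (1:ℝ)).pow (m+1)
  have h := hp.mul (fAux_hasDeriv N x)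
  have heq : GAux N m = fun y : ℝ => (1-y)^(m+1) * fAux N y := by
    funext y; unfold GAux; ring
  rw [heq]
  convert h using 1
  · exact rfl
  · exact rfl
  · exact rfl
  have : m + 1 - 1 = m := by omega
  rw [this]
  push_cast
  ring

lemma GAux_antitone (m : ℕ) (N : ℝ) (hN : N = (m:ℝ) + 3) :
    AntitoneOn (GAux N m) (Set.Icc 0 (1/N)) := by
  have hm0 : (0:ℝ) ≤ (m:ℝ) := Nat.cast_nonneg m
  have hN3 : (3:ℝ) ≤ N := by rw [hN]; linarith
  have hN0 : (0:ℝ) < N := by linarith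
  apply antitoneOn_of_deriv_nonpos (convex_Icc _ _)
  · exact fun x _ => ((GAux_hasDeriv N m x).continuousAt).continuousWithinAt
  · exact fun x _ => ((GAux_hasDeriv N m x).differentiableAt).differentiableWithinAt
  · intro x hx
    rw [interior_Icc, Set.mem_Ioo] at hx
    rw [(GAux_hasDeriv N m x).deriv]
    have hx1 : N * x ≤ 1 := by
      have := hx.2.le
      rw [le_div_iff₀ hN0] at this
      linarith [this]
    have hxlt : x < 1 := by nlinarith [hx.1]
    apply mul_nonpos_of_nonneg_of_nonpos
    · exact pow_nonneg (by linarith) m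
    · have h := phi_nonpos N x hN3 hx.1.le hx1
      have : ((m:ℝ)+1) = N - 2 := by rw [hN]; ring
      rw [this]
      exact h

lemma choose_cast (m : ℕ) : (((m+4).choose (m+2) : ℕ) : ℝ) = ((m:ℝ)+4)*((m:ℝ)+3)/2 := by
  have h1 : (m+4).choose (m+2) = (m+4).choose 2 := by
    have h := Nat.choose_symm (show 2 ≤ m + 4 by omega)
    rwa [show m + 4 - 2 = m + 2 from by omega] at h
  have hdvd : 2 ∣ (m+4) * (m+4-1) := by
    rw [show m+4-1 = m+3 from rfl]
    have h := Nat.even_mul_succ_self (m+3)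
    rw [Nat.mul_comm] at h
    exact h.two_dvd
  rw [h1, Nat.choose_two_right, Nat.cast_div hdvd (by norm_num)]
  push_cast [show m+4-1 = m+3 from rfl]
  ring

theorem qdist_top_minus_pdist_lower_bound (n : ℕ) (hn : 3 ≤ n) (t : ℝ)
    (h0 : 0 ≤ t) (h2 : t ≤ 1 / (n : ℝ)) :
    ((n : ℝ) + 1) * ((n : ℝ) - 2) / (4 * (n : ℝ) * ((n : ℝ) - 1)) * (1 - 1 / (n : ℝ)) ^ n
      ≤ qdist n (n + 1) t - pdist n (n - 1) t := by
  obtain ⟨m, rfl⟩ : ∃ m, n = m + 3 := ⟨n - 3, by omega⟩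
  have hm0 : (0:ℝ) ≤ (m:ℝ) := Nat.cast_nonneg m
  set N : ℝ := (m:ℝ) + 3 with hNdef
  have hN3 : (3:ℝ) ≤ N := by rw [hNdef]; linarith
  have hN0 : (0:ℝ) < N := by linarith
  have hcast : ((m+3 : ℕ) : ℝ) = N := by rw [hNdef]; push_cast; ring
  have h2' : t ≤ 1/N := by rwa [hcast] at h2
  have ht1 : t < 1 := lt_of_le_of_lt h2' (by rw [div_lt_one hN0]; linarith)
  have h1t : (0:ℝ) < 1 - t := by linarith
  have hne : (1:ℝ) - t ≠ 0 := ne_of_gt h1t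
  have hNe : N + 1 ≠ 0 := by positivity
  have hNne : N ≠ 0 := ne_of_gt hN0
  have hN1ne : N - 1 ≠ 0 := by intro h; nlinarith
  rw [show m + 3 - 1 = m + 2 from rfl, hcast]
  have hq : qdist (m+3) (m+3+1) t = (1-t)^(m+3) * (1 + (N+1)*t) / 2 := by
    unfold qdist
    rw [if_neg (by omega), hcast]
  have hp : pdist (m+3) (m+2) t
      = 1/(2*(N+1)*(1-t)) * ((N+1)*N/2) * (1-t)^(m+2) * t
        * ((1-t)*2 + ((N+1)*(1-t) - (N-1))^2) := by
    unfold pdist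
    rw [if_pos (by omega)]
    rw [show m+3 - (m+2) = 1 from by omega]
    rw [show m+3+1 = m+4 from rfl, choose_cast m]
    push_cast
    rw [hNdef]
    ring
  have hE1 : (1-t)^(m+3) * (1 + (N+1)*t) / 2
      - (1/(2*(N+1)*(1-t)) * ((N+1)*N/2) * (1-t)^(m+2) * t
        * ((1-t)*2 + ((N+1)*(1-t) - (N-1))^2)) = GAux N m t := by
    unfold GAux fAux
    field_simp
    ring
  have h1N : (0:ℝ) < 1 - 1/N := by
    have : 1/N < 1 := by rw [div_lt_one hN0]; linarith
    linarith
  have hE2 : (N+1)*(N-2)/(4*N*(N-1)) * (1 - 1/N)^(m+3) = GAux N m (1/N) := by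
    unfold GAux fAux
    rw [show (1 - 1/N)^(m+3) = (1-1/N)^(m+1) * (1-1/N)^2 from by ring]
    field_simp
    ring
  have hmono := GAux_antitone m N hNdef ⟨h0, h2'⟩ ⟨by positivity, le_refl _⟩ h2'
  rw [hq, hp]
  linarith [hE1, hE2, hmono]
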